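/- Let μ be a joint probability mass function on 𝒜 × ℬ × 𝒞 for countable alphabets 𝒜, ℬ, 𝒞 that forms a Markov chain A → B → C, i.e., μ(a,b,c)·μ_B(b) = μ_{AB}(a,b)·μ_{BC}(b,c) for all a, b, c. Then the mutual affinity of A with the pair (B,C) equals the mutual affinity of A with B alone: ‖μ_A ⊗ μ_{BC}, μ‖ = ‖μ_A ⊗ μ_B, μ_{AB}‖. -/

import Mathlib

/-- Total variation distance between two pmfs: `1 - ∑ min`. -/
noncomputable def tv {A : Type*} (p q : A → ℝ) : ℝ := 1 - ∑' a, min (p a) (q a)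

/-- if `A → B → C` is a Markov chain, then the mutual affinity
of `A` with the pair `(B,C)` equals the mutual affinity of `A` with `B`. -/
theorem stmt5 {A B C : Type*} [Countable A] [Countable B] [Countable C]
    (μ : A × B × C → ℝ) (h0 : ∀ p, 0 ≤ μ p) (h1 : HasSum μ 1)
    (μA : A → ℝ) (hA : ∀ a, μA a = ∑' bc : B × C, μ (a, bc))
    (μB : B → ℝ) (hB : ∀ b, μB b = ∑' ac : A × C, μ (ac.1, b, ac.2))
    (μAB : A × B → ℝ) (hAB : ∀ a b, μAB (a, b) = ∑' c, μ (a, b, c))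
    (μBC : B × C → ℝ) (hBC : ∀ b c, μBC (b, c) = ∑' a, μ (a, b, c))
    (hMarkov : ∀ a b c, μ (a, b, c) * μB b = μAB (a, b) * μBC (b, c)) :
    tv (fun p : A × B × C => μA p.1 * μBC p.2) μ =
      tv (fun p : A × B => μA p.1 * μB p.2) μAB := by
  have hμs : Summable μ := h1.summable
  -- nonnegativity of marginals
  have hA0 : ∀ a, 0 ≤ μA a := fun a => (hA a) ▸ tsum_nonneg (fun _ => h0 _)
  have hB0 : ∀ b, 0 ≤ μB b := fun b => (hB b) ▸ tsum_nonneg (fun _ => h0 _)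
  have hAB0 : ∀ a b, 0 ≤ μAB (a, b) := fun a b => (hAB a b) ▸ tsum_nonneg (fun _ => h0 _)
  have hBC0 : ∀ b c, 0 ≤ μBC (b, c) := fun b c => (hBC b c) ▸ tsum_nonneg (fun _ => h0 _)
  -- fiber summabilities
  have hfibB : ∀ b, Summable (fun ac : A × C => μ (ac.1, b, ac.2)) := by
    intro b
    exact hμs.comp_injective (i := fun ac : A × C => (ac.1, b, ac.2))
      (fun x y h => by
        simp only [Prod.mk.injEq] at h
        exact Prod.ext h.1 h.2.2)
  have hfibBa : ∀ b c, Summable (fun a => μ (a, b, c)) := by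
    intro b c
    exact hμs.comp_injective (i := fun a : A => (a, b, c))
      (fun x y h => by
        simp only [Prod.mk.injEq] at h
        exact h.1)
  have hfibAB : ∀ a b, Summable (fun c => μ (a, b, c)) := by
    intro a b
    exact hμs.comp_injective (i := fun c : C => (a, b, c))
      (fun x y h => by
        simp only [Prod.mk.injEq] at h
        exact h.2.2)
  -- μB b = ∑' c, μBC (b, c)
  have hBCsum : ∀ b, Summable (fun c => μBC (b, c)) := by
    intro b
    have h2 : Summable (fun ca : C × A => μ (ca.2, b, ca.1)) :=
      (Equiv.summable_iff (Equiv.prodComm C A)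
        (f := fun ac : A × C => μ (ac.1, b, ac.2))).mpr (hfibB b)
    have := h2.prod
    simpa [hBC] using this
  have hBsum : ∀ b, μB b = ∑' c, μBC (b, c) := by
    intro b
    have h2 : Summable (fun ca : C × A => μ (ca.2, b, ca.1)) :=
      (Equiv.summable_iff (Equiv.prodComm C A)
        (f := fun ac : A × C => μ (ac.1, b, ac.2))).mpr (hfibB b)
    calc μB b = ∑' ac : A × C, μ (ac.1, b, ac.2) := hB b
      _ = ∑' ca : C × A, μ (ca.2, b, ca.1) := ((Equiv.prodComm C A).tsum_eq _).symm
      _ = ∑' c, ∑' a, μ (a, b, c) := h2.tsum_prod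
      _ = ∑' c, μBC (b, c) := by simp [hBC]
  -- if μB b = 0 then everything in the fiber vanishes
  have hzero : ∀ b, μB b = 0 → ∀ a c, μ (a, b, c) = 0 := by
    intro b hb a c
    have hle : μ (a, b, c) ≤ μB b := by
      rw [hB]
      exact Summable.le_tsum (hfibB b) (a, c) (fun j _ => h0 _)
    exact le_antisymm (hb ▸ hle) (h0 _)
  -- the key fiberwise identity
  have key : ∀ a b, ∑' c, min (μA a * μBC (b, c)) (μ (a, b, c))
      = min (μA a * μB b) (μAB (a, b)) := by
    intro a b
    rcases eq_or_lt_of_le (hB0 b) with hb | hb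
    · have hz := hzero b hb.symm a
      have hBCz : ∀ c, μBC (b, c) = 0 := by
        intro c
        rw [hBC]
        simp [hzero b hb.symm]
      have hABz : μAB (a, b) = 0 := by
        rw [hAB]; simp [hz]
      simp [hBCz, hz, hABz, ← hb]
    · -- positive case
      have hbne : μB b ≠ 0 := ne_of_gt hb
      have hterm : ∀ c, min (μA a * μBC (b, c)) (μ (a, b, c))
          = (μBC (b, c) / μB b) * min (μA a * μB b) (μAB (a, b)) := by
        intro c
        have hμv : μ (a, b, c) = (μBC (b, c) / μB b) * μAB (a, b) := by
          field_simp
          linarith [hMarkov a b c]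
        have h1' : μA a * μBC (b, c) = (μBC (b, c) / μB b) * (μA a * μB b) := by
          field_simp
        rw [hμv, h1', mul_min_of_nonneg _ _ (div_nonneg (hBC0 b c) (hB0 b))]
      rw [tsum_congr hterm, tsum_mul_right]
      rw [tsum_div_const, ← hBsum b, div_self hbne, one_mul]
  -- assemble
  have hFs : Summable (fun p : A × B × C => min (μA p.1 * μBC p.2) (μ p)) := by
    apply Summable.of_nonneg_of_le _ _ hμs
    · intro p
      exact le_min (mul_nonneg (hA0 _) (hBC0 _ _)) (h0 _)
    · intro p
      exact min_le_right _ _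
  have hFs' : Summable (fun r : (A × B) × C =>
      min (μA r.1.1 * μBC (r.1.2, r.2)) (μ (r.1.1, r.1.2, r.2))) := by
    have := (Equiv.prodAssoc A B C).summable_iff.mpr hFs
    exact this
  unfold tv
  congr 1
  calc ∑' p : A × B × C, min (μA p.1 * μBC p.2) (μ p)
      = ∑' r : (A × B) × C, min (μA r.1.1 * μBC (r.1.2, r.2)) (μ (r.1.1, r.1.2, r.2)) := by
        rw [← (Equiv.prodAssoc A B C).tsum_eq
          (f := fun p : A × B × C => min (μA p.1 * μBC p.2) (μ p))]
        rfl
    _ = ∑' ab : A × B, ∑' c, min (μA ab.1 * μBC (ab.2, c)) (μ (ab.1, ab.2, c)) :=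
        hFs'.tsum_prod
    _ = ∑' ab : A × B, min (μA ab.1 * μB ab.2) (μAB ab) := by
        exact tsum_congr fun ab => key ab.1 ab.2
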